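/- For all positive integers w₁, w₂, every ℓ ≥ 0, and any rational x: Σ_{i=0}^{ℓ} (ℓ choose i) B_i(w₂ x) S_{ℓ-i}(w₁) w₁^{i-1} w₂^{ℓ-i} = Σ_{i=0}^{ℓ} (ℓ choose i) B_i(w₁ x) S_{ℓ-i}(w₂) w₂^{i-1} w₁^{ℓ-i}, where S_k(n) = Σ_{j=0}^{n-1} j^k. (The d = 1, trivial character case of Theorem 2.) -/

import Mathlib

/-- Power sum `S_k(n) = ∑_{j=0}^{n-1} j^k`. -/
def powSum (k n : ℕ) : ℚ := ∑ j ∈ Finset.range n, (j : ℚ) ^ k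

open PowerSeries Finset

noncomputable def bexp (y : ℚ) : ℚ⟦X⟧ :=
  PowerSeries.mk fun n => Polynomial.aeval y ((1 / n.factorial : ℚ) • Polynomial.bernoulli n)

lemma bexp_spec (y : ℚ) : bexp y * (exp ℚ - 1) = PowerSeries.X * rescale y (exp ℚ) :=
  Polynomial.bernoulli_generating_function y

lemma coeff_bexp (y : ℚ) (n : ℕ) :
    (PowerSeries.coeff n) (bexp y) = (1 / n.factorial : ℚ) * (Polynomial.bernoulli n).eval y := by
  simp [bexp, Polynomial.aeval_def, Polynomial.eval₂_eq_eval_map]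

lemma expm1_ne_zero : (exp ℚ - 1 : ℚ⟦X⟧) ≠ 0 := by
  intro h
  have := congrArg (PowerSeries.coeff 1) h
  simp [coeff_exp] at this

lemma bexp_add (x y : ℚ) : bexp (x + y) = bexp x * rescale y (exp ℚ) := by
  refine mul_right_cancel₀ expm1_ne_zero ?_
  calc bexp (x + y) * (exp ℚ - 1) = PowerSeries.X * rescale (x + y) (exp ℚ) := bexp_spec _
    _ = PowerSeries.X * (rescale x (exp ℚ) * rescale y (exp ℚ)) := by
        rw [exp_mul_exp_eq_exp_add]
    _ = (bexp x * (exp ℚ - 1)) * rescale y (exp ℚ) := by rw [bexp_spec]; ring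
    _ = bexp x * rescale y (exp ℚ) * (exp ℚ - 1) := by ring

lemma bern_eval_add (n : ℕ) (x y : ℚ) :
    (Polynomial.bernoulli n).eval (x + y) =
      ∑ i ∈ range (n + 1), (n.choose i : ℚ) * (Polynomial.bernoulli i).eval x * y ^ (n - i) := by
  have h := congrArg (PowerSeries.coeff n) (bexp_add x y)
  rw [coeff_bexp, PowerSeries.coeff_mul, Finset.Nat.sum_antidiagonal_eq_sum_range_succ_mk] at h
  have hn : (n.factorial : ℚ) ≠ 0 := by exact_mod_cast n.factorial_ne_zero
  calc (Polynomial.bernoulli n).eval (x + y)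
      = (n.factorial : ℚ) * ((1 / n.factorial : ℚ) * (Polynomial.bernoulli n).eval (x + y)) := by
        field_simp
    _ = ∑ i ∈ range (n + 1), (n.factorial : ℚ) *
          ((PowerSeries.coeff i) (bexp x) * (PowerSeries.coeff (n - i)) (rescale y (exp ℚ))) := by
        rw [h, Finset.mul_sum]
    _ = ∑ i ∈ range (n + 1), (n.choose i : ℚ) * (Polynomial.bernoulli i).eval x * y ^ (n - i) := by
        refine Finset.sum_congr rfl fun i hi => ?_
        have hin : i ≤ n := Nat.lt_succ_iff.mp (Finset.mem_range.mp hi)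
        rw [coeff_bexp, PowerSeries.coeff_rescale, PowerSeries.coeff_exp,
          Nat.cast_choose ℚ hin]
        have h1 : (i.factorial : ℚ) ≠ 0 := by exact_mod_cast i.factorial_ne_zero
        have h2 : ((n - i).factorial : ℚ) ≠ 0 := by exact_mod_cast (n - i).factorial_ne_zero
        simp only [eq_ratCast, Rat.cast_div, Rat.cast_one, Rat.cast_natCast]
        field_simp

lemma geom_exp (m : ℕ) (hm : 0 < m) :
    (rescale (1 / m : ℚ) (exp ℚ) - 1) * (∑ k ∈ range m, rescale (k / m : ℚ) (exp ℚ)) =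
      exp ℚ - 1 := by
  have hmQ : (m : ℚ) ≠ 0 := Nat.cast_ne_zero.mpr hm.ne'
  rw [Finset.mul_sum]
  have step : ∀ k ∈ range m, (rescale (1 / m : ℚ) (exp ℚ) - 1) * rescale (k / m : ℚ) (exp ℚ)
      = rescale ((((k + 1) : ℕ) : ℚ) / m) (exp ℚ) - rescale (((k : ℕ) : ℚ) / m) (exp ℚ) := by
    intro k _
    rw [sub_mul, one_mul, exp_mul_exp_eq_exp_add]
    congr 2
    push_cast
    ring
  rw [Finset.sum_congr rfl step,
    Finset.sum_range_sub (fun k => rescale (((k : ℕ) : ℚ) / m) (exp ℚ))]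
  rw [div_self hmQ, Nat.cast_zero, zero_div, PowerSeries.rescale_one, PowerSeries.rescale_zero]
  simp

lemma raabe_ps (m : ℕ) (hm : 0 < m) (y : ℚ) :
    (∑ k ∈ range m, bexp (y + k / m)) =
      PowerSeries.C (m : ℚ) * rescale (1 / m : ℚ) (bexp ((m : ℚ) * y)) := by
  have hmQ : (m : ℚ) ≠ 0 := Nat.cast_ne_zero.mpr hm.ne'
  refine mul_right_cancel₀ expm1_ne_zero ?_
  have h1 : rescale (1 / m : ℚ) (bexp ((m : ℚ) * y)) * (rescale (1 / m : ℚ) (exp ℚ) - 1) =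
      PowerSeries.C (1 / m : ℚ) * PowerSeries.X * rescale y (exp ℚ) := by
    have h := congrArg (rescale (1 / m : ℚ)) (bexp_spec ((m : ℚ) * y))
    rw [map_mul, map_sub, map_one, map_mul, PowerSeries.rescale_X,
      PowerSeries.rescale_rescale] at h
    rw [h]
    congr 2
    field_simp
  have hC : PowerSeries.C (m : ℚ) * PowerSeries.C (1 / m : ℚ) = 1 := by
    rw [← map_mul, mul_one_div_cancel hmQ, map_one]
  calc (∑ k ∈ range m, bexp (y + k / m)) * (exp ℚ - 1)
      = ∑ k ∈ range m, PowerSeries.X * (rescale y (exp ℚ) * rescale (k / m : ℚ) (exp ℚ)) := by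
        rw [Finset.sum_mul]
        refine Finset.sum_congr rfl fun k _ => ?_
        rw [bexp_spec, ← exp_mul_exp_eq_exp_add]
    _ = PowerSeries.X * rescale y (exp ℚ) * ∑ k ∈ range m, rescale (k / m : ℚ) (exp ℚ) := by
        rw [Finset.mul_sum]; exact Finset.sum_congr rfl fun k _ => by ring
    _ = PowerSeries.C (m : ℚ) * rescale (1 / m : ℚ) (bexp ((m : ℚ) * y)) * (exp ℚ - 1) := by
        rw [← geom_exp m hm]
        linear_combination (-(PowerSeries.C (m : ℚ)) *
            (∑ k ∈ range m, rescale (k / m : ℚ) (exp ℚ))) * h1 -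
          (PowerSeries.X * rescale y (exp ℚ) *
            (∑ k ∈ range m, rescale (k / m : ℚ) (exp ℚ))) * hC

lemma raabe (m : ℕ) (hm : 0 < m) (y : ℚ) (n : ℕ) :
    (m : ℚ) ^ n * ∑ k ∈ range m, (Polynomial.bernoulli n).eval (y + k / m) =
      (m : ℚ) * (Polynomial.bernoulli n).eval ((m : ℚ) * y) := by
  have hmQ : (m : ℚ) ≠ 0 := Nat.cast_ne_zero.mpr hm.ne'
  have h := congrArg (PowerSeries.coeff n) (raabe_ps m hm y)
  rw [map_sum, PowerSeries.coeff_C_mul, PowerSeries.coeff_rescale, coeff_bexp] at h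
  simp only [coeff_bexp] at h
  have hn : (n.factorial : ℚ) ≠ 0 := by exact_mod_cast n.factorial_ne_zero
  have h2 : (1 / n.factorial : ℚ) * ∑ k ∈ range m, (Polynomial.bernoulli n).eval (y + k / m) =
      (m : ℚ) * ((1 / m : ℚ) ^ n * ((1 / n.factorial : ℚ) *
        (Polynomial.bernoulli n).eval ((m : ℚ) * y))) := by
    rw [← h, Finset.mul_sum]
  have h4 : ∑ k ∈ range m, (Polynomial.bernoulli n).eval (y + k / m) =
      (m : ℚ) * ((1 / m : ℚ) ^ n * (Polynomial.bernoulli n).eval ((m : ℚ) * y)) := by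
    apply mul_left_cancel₀ (show (1 / (n.factorial : ℚ)) ≠ 0 from one_div_ne_zero hn)
    rw [h2]; ring
  rw [h4]
  have hmn : (m : ℚ) ^ n * (1 / m : ℚ) ^ n = 1 := by
    rw [← mul_pow, mul_one_div_cancel hmQ, one_pow]
  linear_combination ((m : ℚ) * (Polynomial.bernoulli n).eval ((m : ℚ) * y)) * hmn

lemma side (w₁ w₂ : ℕ) (h₁ : 0 < w₁) (h₂ : 0 < w₂) (ℓ : ℕ) (x : ℚ) :
    (w₁ : ℚ) * (w₂ : ℚ) * ∑ i ∈ Finset.range (ℓ + 1), (ℓ.choose i : ℚ) *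
        (Polynomial.bernoulli i).eval ((w₂ : ℚ) * x) * powSum (ℓ - i) w₁ *
        (w₁ : ℚ) ^ ((i : ℤ) - 1) * (w₂ : ℚ) ^ (ℓ - i) =
      (w₁ : ℚ) ^ ℓ * (w₂ : ℚ) ^ ℓ * ∑ j ∈ range w₁, ∑ k ∈ range w₂,
        (Polynomial.bernoulli ℓ).eval (x + (j : ℚ) / w₁ + (k : ℚ) / w₂) := by
  have hq₁ : (w₁ : ℚ) ≠ 0 := Nat.cast_ne_zero.mpr h₁.ne'
  have hq₂ : (w₂ : ℚ) ≠ 0 := Nat.cast_ne_zero.mpr h₂.ne'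
  calc (w₁ : ℚ) * (w₂ : ℚ) * ∑ i ∈ Finset.range (ℓ + 1), (ℓ.choose i : ℚ) *
        (Polynomial.bernoulli i).eval ((w₂ : ℚ) * x) * powSum (ℓ - i) w₁ *
        (w₁ : ℚ) ^ ((i : ℤ) - 1) * (w₂ : ℚ) ^ (ℓ - i)
      = ∑ i ∈ Finset.range (ℓ + 1), ∑ j ∈ range w₁, (w₂ : ℚ) *
          ((ℓ.choose i : ℚ) * (Polynomial.bernoulli i).eval ((w₂ : ℚ) * x) *
            ((w₂ : ℚ) * j) ^ (ℓ - i) * (w₁ : ℚ) ^ i) := by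
        rw [Finset.mul_sum]
        refine Finset.sum_congr rfl fun i _ => ?_
        rw [zpow_sub₀ hq₁, zpow_natCast, zpow_one, powSum]
        simp only [Finset.sum_mul, Finset.mul_sum, Finset.sum_div, div_mul_eq_mul_div]
        refine Finset.sum_congr rfl fun j _ => ?_
        rw [mul_pow]
        field_simp
    _ = ∑ j ∈ range w₁, (w₂ : ℚ) * ((w₁ : ℚ) ^ ℓ *
          (Polynomial.bernoulli ℓ).eval ((w₂ : ℚ) * x + (w₂ : ℚ) * j / w₁)) := by
        rw [Finset.sum_comm]
        refine Finset.sum_congr rfl fun j _ => ?_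
        rw [bern_eval_add ℓ ((w₂ : ℚ) * x) ((w₂ : ℚ) * j / w₁), Finset.mul_sum, Finset.mul_sum]
        refine Finset.sum_congr rfl fun i hi => ?_
        have hin : i ≤ ℓ := Nat.lt_succ_iff.mp (Finset.mem_range.mp hi)
        have hpow : (w₁ : ℚ) ^ (ℓ - i) * (w₁ : ℚ) ^ i = (w₁ : ℚ) ^ ℓ := by
          rw [← pow_add, Nat.sub_add_cancel hin]
        rw [div_pow]
        field_simp
        linear_combination ((ℓ.choose i : ℚ) *
          (Polynomial.bernoulli i).eval ((w₂ : ℚ) * x) * ((w₂ : ℚ) * j) ^ (ℓ - i)) * hpow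
    _ = ∑ j ∈ range w₁, (w₁ : ℚ) ^ ℓ * ((w₂ : ℚ) ^ ℓ * ∑ k ∈ range w₂,
          (Polynomial.bernoulli ℓ).eval (x + (j : ℚ) / w₁ + (k : ℚ) / w₂)) := by
        refine Finset.sum_congr rfl fun j _ => ?_
        rw [raabe w₂ h₂ (x + (j : ℚ) / w₁) ℓ, mul_add, mul_div_assoc]
        ring
    _ = (w₁ : ℚ) ^ ℓ * (w₂ : ℚ) ^ ℓ * ∑ j ∈ range w₁, ∑ k ∈ range w₂,
          (Polynomial.bernoulli ℓ).eval (x + (j : ℚ) / w₁ + (k : ℚ) / w₂) := by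
        rw [Finset.mul_sum]
        exact Finset.sum_congr rfl fun j _ => by ring


theorem stmt13 (w₁ w₂ : ℕ) (hw₁ : 0 < w₁) (hw₂ : 0 < w₂) (ℓ : ℕ) (x : ℚ) :
    ∑ i ∈ Finset.range (ℓ + 1), (ℓ.choose i : ℚ) *
        (Polynomial.bernoulli i).eval ((w₂ : ℚ) * x) * powSum (ℓ - i) w₁ *
        (w₁ : ℚ) ^ ((i : ℤ) - 1) * (w₂ : ℚ) ^ (ℓ - i) =
      ∑ i ∈ Finset.range (ℓ + 1), (ℓ.choose i : ℚ) *
        (Polynomial.bernoulli i).eval ((w₁ : ℚ) * x) * powSum (ℓ - i) w₂ *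
        (w₂ : ℚ) ^ ((i : ℤ) - 1) * (w₁ : ℚ) ^ (ℓ - i) := by
  have hq₁ : (w₁ : ℚ) ≠ 0 := Nat.cast_ne_zero.mpr hw₁.ne'
  have hq₂ : (w₂ : ℚ) ≠ 0 := Nat.cast_ne_zero.mpr hw₂.ne'
  apply mul_left_cancel₀ (mul_ne_zero hq₁ hq₂)
  rw [side w₁ w₂ hw₁ hw₂ ℓ x, mul_comm (w₁ : ℚ) (w₂ : ℚ), side w₂ w₁ hw₂ hw₁ ℓ x,
    Finset.sum_comm]
  rw [mul_comm ((w₁ : ℚ) ^ ℓ) ((w₂ : ℚ) ^ ℓ)]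
  congr 1
  refine Finset.sum_congr rfl fun k _ => Finset.sum_congr rfl fun j _ => ?_
  ring_nf
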